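/- Let a, b : [−π, π] → ℝ be continuous with b everywhere strictly positive, and suppose the functions θ ↦ (b(−θ)−b(θ))/θ and θ ↦ (a(θ)b(−θ)−b(θ)a(−θ))/θ extend continuously to θ = 0. Define J(ε) = ∫_{0}^{π} θ·[ (a(θ)/b(θ))·1/(ε + b(θ)θ²) − (a(−θ)/b(−θ))·1/(ε + b(−θ)θ²) ] dθ for ε ≥ 0. Then lim_{ε→0⁺} J(ε) = J(0) = ∫_{0}^{π} (1/θ)·[ a(θ)/b(θ)² − a(−θ)/b(−θ)² ] dθ. -/

import Mathlib

open Set Filter MeasureTheory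
open scoped Topology

/-- A function with a finite limit at `0` (within the punctured line) that is continuous on
every `Icc r π` with `r > 0` is bounded on `Ioc 0 π`. -/
lemma aux_bdd_J_limit {g : ℝ → ℝ} {L : ℝ}
    (hg : Filter.Tendsto g (nhdsWithin 0 {(0:ℝ)}ᶜ) (nhds L))
    (hc : ∀ r : ℝ, 0 < r → ContinuousOn g (Set.Icc r Real.pi)) :
    ∃ M : ℝ, 0 ≤ M ∧ ∀ θ ∈ Set.Ioc 0 Real.pi, |g θ| ≤ M := by
  have h1 : {θ : ℝ | dist (g θ) L < 1} ∈ nhdsWithin 0 {(0:ℝ)}ᶜ :=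
    hg (Metric.ball_mem_nhds L one_pos)
  rw [Metric.mem_nhdsWithin_iff] at h1
  obtain ⟨r, hr, hball⟩ := h1
  set s := min (r / 2) Real.pi with hs
  have hspos : 0 < s := lt_min (by linarith) Real.pi_pos
  obtain ⟨M₀, hM₀⟩ :=
    (isCompact_Icc (a := s) (b := Real.pi)).exists_bound_of_continuousOn (hc s hspos)
  refine ⟨max (max M₀ (|L| + 1)) 0, le_max_right _ _, ?_⟩
  intro θ hθ
  rcases le_or_gt s θ with h | h
  · have := hM₀ θ ⟨h, hθ.2⟩
    simp only [Real.norm_eq_abs] at this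
    exact le_trans this (le_trans (le_max_left _ _) (le_max_left _ _))
  · have hθr : θ ∈ Metric.ball (0:ℝ) r := by
      rw [Metric.mem_ball, Real.dist_eq, sub_zero, abs_of_pos hθ.1]
      have : s ≤ r / 2 := min_le_left _ _
      linarith
    have h2 : dist (g θ) L < 1 := hball ⟨hθr, by simpa using ne_of_gt hθ.1⟩
    rw [Real.dist_eq] at h2
    have h3 : |g θ| ≤ |L| + 1 := by
      have := abs_sub_abs_le_abs_sub (g θ) L
      linarith
    exact le_trans h3 (le_trans (le_max_right _ _) (le_max_left _ _))

theorem J_limit (a b : ℝ → ℝ)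
    (ha : ContinuousOn a (Set.Icc (-Real.pi) Real.pi))
    (hb : ContinuousOn b (Set.Icc (-Real.pi) Real.pi))
    (hbpos : ∀ θ ∈ Set.Icc (-Real.pi) Real.pi, 0 < b θ)
    (hext1 : ∃ L₁ : ℝ, Filter.Tendsto (fun θ : ℝ => (b (-θ) - b θ) / θ)
      (nhdsWithin 0 {(0:ℝ)}ᶜ) (nhds L₁))
    (hext2 : ∃ L₂ : ℝ, Filter.Tendsto (fun θ : ℝ => (a θ * b (-θ) - b θ * a (-θ)) / θ)
      (nhdsWithin 0 {(0:ℝ)}ᶜ) (nhds L₂))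
    (J : ℝ → ℝ)
    (hJ : ∀ ε : ℝ, 0 ≤ ε → J ε = ∫ θ in (0:ℝ)..Real.pi,
      θ * ((a θ / b θ) * (1 / (ε + b θ * θ ^ 2)) -
           (a (-θ) / b (-θ)) * (1 / (ε + b (-θ) * θ ^ 2)))) :
    Filter.Tendsto J (nhdsWithin 0 (Set.Ioi 0)) (nhds (J 0)) ∧
    J 0 = ∫ θ in (0:ℝ)..Real.pi,
      (1 / θ) * (a θ / (b θ) ^ 2 - a (-θ) / (b (-θ)) ^ 2) := by
  obtain ⟨L₁, hL₁⟩ := hext1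
  obtain ⟨L₂, hL₂⟩ := hext2
  have hπ : 0 < Real.pi := Real.pi_pos
  -- membership facts
  have hmem : ∀ θ ∈ Set.Ioc (0:ℝ) Real.pi,
      θ ∈ Set.Icc (-Real.pi) Real.pi ∧ -θ ∈ Set.Icc (-Real.pi) Real.pi := by
    intro θ hθ
    exact ⟨⟨by linarith [hθ.1], hθ.2⟩, ⟨by linarith [hθ.2], by linarith [hθ.1]⟩⟩
  -- the integrand family
  set F : ℝ → ℝ → ℝ := fun ε θ =>
    θ * ((a θ / b θ) * (1 / (ε + b θ * θ ^ 2)) -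
         (a (-θ) / b (-θ)) * (1 / (ε + b (-θ) * θ ^ 2))) with hF
  -- lower bound for b
  obtain ⟨x₀, hx₀, hx₀min⟩ := (isCompact_Icc (a := -Real.pi) (b := Real.pi)).exists_isMinOn
    (Set.nonempty_Icc.2 (by linarith)) hb
  set m := b x₀ with hm
  have hmpos : 0 < m := hbpos x₀ hx₀
  have hmle : ∀ θ ∈ Set.Icc (-Real.pi) Real.pi, m ≤ b θ := fun θ hθ => hx₀min hθ
  -- upper bound for |a|
  obtain ⟨A₀, hA₀⟩ := (isCompact_Icc (a := -Real.pi) (b := Real.pi)).exists_bound_of_continuousOn ha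
  set A := max A₀ 0 with hA
  have hAnn : 0 ≤ A := le_max_right _ _
  have hAle : ∀ θ ∈ Set.Icc (-Real.pi) Real.pi, |a θ| ≤ A := by
    intro θ hθ
    have := hA₀ θ hθ
    simp only [Real.norm_eq_abs] at this
    exact le_trans this (le_max_left _ _)
  -- continuity of b (-·) and a (-·) on subsets
  have hsub : ∀ r : ℝ, 0 < r → Set.Icc r Real.pi ⊆ Set.Icc (-Real.pi) Real.pi := by
    intro r hr x hx
    exact ⟨by linarith [hx.1], hx.2⟩
  have hmaps : ∀ r : ℝ, 0 < r →
      Set.MapsTo (fun x : ℝ => -x) (Set.Icc r Real.pi) (Set.Icc (-Real.pi) Real.pi) := by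
    intro r hr x hx
    simp only [Set.mem_Icc]
    constructor <;> linarith [hx.1, hx.2]
  -- bounds for the two difference quotients
  obtain ⟨M₁, hM₁nn, hM₁⟩ : ∃ M : ℝ, 0 ≤ M ∧
      ∀ θ ∈ Set.Ioc 0 Real.pi, |(b (-θ) - b θ) / θ| ≤ M := by
    apply aux_bdd_J_limit hL₁
    intro r hr
    have hbneg : ContinuousOn (fun θ : ℝ => b (-θ)) (Set.Icc r Real.pi) :=
      hb.comp continuous_neg.continuousOn (hmaps r hr)
    exact (hbneg.sub (hb.mono (hsub r hr))).div continuousOn_id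
      (fun x hx => ne_of_gt (lt_of_lt_of_le hr hx.1))
  obtain ⟨M₂, hM₂nn, hM₂⟩ : ∃ M : ℝ, 0 ≤ M ∧
      ∀ θ ∈ Set.Ioc 0 Real.pi, |(a θ * b (-θ) - b θ * a (-θ)) / θ| ≤ M := by
    apply aux_bdd_J_limit hL₂
    intro r hr
    have hbneg : ContinuousOn (fun θ : ℝ => b (-θ)) (Set.Icc r Real.pi) :=
      hb.comp continuous_neg.continuousOn (hmaps r hr)
    have haneg : ContinuousOn (fun θ : ℝ => a (-θ)) (Set.Icc r Real.pi) :=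
      ha.comp continuous_neg.continuousOn (hmaps r hr)
    exact (((ha.mono (hsub r hr)).mul hbneg).sub ((hb.mono (hsub r hr)).mul haneg)).div
      continuousOn_id (fun x hx => ne_of_gt (lt_of_lt_of_le hr hx.1))
  -- the uniform bound
  set C := A * M₁ / m ^ 3 + M₂ / m ^ 3 with hC
  have key : ∀ ε : ℝ, 0 ≤ ε → ∀ θ ∈ Set.Ioc (0:ℝ) Real.pi, |F ε θ| ≤ C := by
    intro ε hε θ hθ
    obtain ⟨hθmem, hθnegmem⟩ := hmem θ hθ
    have hθpos : 0 < θ := hθ.1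
    have hθne : θ ≠ 0 := ne_of_gt hθpos
    have hp : 0 < b θ := hbpos θ hθmem
    have hq : 0 < b (-θ) := hbpos (-θ) hθnegmem
    have hθ2 : 0 < θ ^ 2 := pow_pos hθpos 2
    have hD₁ : 0 < ε + b θ * θ ^ 2 := by nlinarith
    have hD₂ : 0 < ε + b (-θ) * θ ^ 2 := by nlinarith
    have hid : F ε θ =
        a θ * θ ^ 3 * (b (-θ) - b θ) / (b θ * (ε + b θ * θ ^ 2) * (ε + b (-θ) * θ ^ 2)) +
        θ * (a θ * b (-θ) - b θ * a (-θ)) / (b θ * b (-θ) * (ε + b (-θ) * θ ^ 2)) := by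
      rw [hF]
      field_simp
      ring
    rw [hid]
    have hbd1 : |a θ * θ ^ 3 * (b (-θ) - b θ) /
        (b θ * (ε + b θ * θ ^ 2) * (ε + b (-θ) * θ ^ 2))| ≤ A * M₁ / m ^ 3 := by
      have hden1pos : 0 < b θ * (ε + b θ * θ ^ 2) * (ε + b (-θ) * θ ^ 2) :=
        mul_pos (mul_pos hp hD₁) hD₂
      rw [abs_div, abs_of_pos hden1pos]
      have hnum : |a θ * θ ^ 3 * (b (-θ) - b θ)| ≤ A * M₁ * θ ^ 4 := by
        have h1 : |b (-θ) - b θ| ≤ M₁ * θ := by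
          have := hM₁ θ hθ
          rw [abs_div, abs_of_pos hθpos, div_le_iff₀ hθpos] at this
          linarith
        calc |a θ * θ ^ 3 * (b (-θ) - b θ)|
            = |a θ| * θ ^ 3 * |b (-θ) - b θ| := by
              rw [abs_mul, abs_mul, abs_pow, abs_of_pos hθpos]
          _ ≤ A * θ ^ 3 * (M₁ * θ) := by
              apply mul_le_mul
              · exact mul_le_mul_of_nonneg_right (hAle θ hθmem) (by positivity)
              · exact h1
              · exact abs_nonneg _
              · exact mul_nonneg hAnn (by positivity)
          _ = A * M₁ * θ ^ 4 := by ring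
      have hden : m ^ 3 * θ ^ 4 ≤ b θ * (ε + b θ * θ ^ 2) * (ε + b (-θ) * θ ^ 2) := by
        have h1 : m ≤ b θ := hmle θ hθmem
        have h2 : m * θ ^ 2 ≤ ε + b θ * θ ^ 2 := by nlinarith
        have h3 : m * θ ^ 2 ≤ ε + b (-θ) * θ ^ 2 := by
          have := hmle (-θ) hθnegmem
          nlinarith
        have hmθ2 : 0 ≤ m * θ ^ 2 := le_of_lt (mul_pos hmpos hθ2)
        calc m ^ 3 * θ ^ 4 = m * (m * θ ^ 2) * (m * θ ^ 2) := by ring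
          _ ≤ b θ * (ε + b θ * θ ^ 2) * (ε + b (-θ) * θ ^ 2) := by
              apply mul_le_mul
              · exact mul_le_mul h1 h2 hmθ2 (le_of_lt hp)
              · exact h3
              · exact hmθ2
              · exact le_of_lt (mul_pos hp hD₁)
      calc |a θ * θ ^ 3 * (b (-θ) - b θ)| /
            (b θ * (ε + b θ * θ ^ 2) * (ε + b (-θ) * θ ^ 2))
          ≤ (A * M₁ * θ ^ 4) / (m ^ 3 * θ ^ 4) :=
            div_le_div₀ (mul_nonneg (mul_nonneg hAnn hM₁nn) (by positivity)) hnum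
              (mul_pos (pow_pos hmpos 3) (pow_pos hθpos 4)) hden
        _ = A * M₁ / m ^ 3 := by
            rw [mul_div_mul_right _ _ (pow_ne_zero 4 hθne)]
    have hbd2 : |θ * (a θ * b (-θ) - b θ * a (-θ)) /
        (b θ * b (-θ) * (ε + b (-θ) * θ ^ 2))| ≤ M₂ / m ^ 3 := by
      have hden2pos : 0 < b θ * b (-θ) * (ε + b (-θ) * θ ^ 2) :=
        mul_pos (mul_pos hp hq) hD₂
      rw [abs_div, abs_of_pos hden2pos]
      have hnum : |θ * (a θ * b (-θ) - b θ * a (-θ))| ≤ M₂ * θ ^ 2 := by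
        have h1 : |a θ * b (-θ) - b θ * a (-θ)| ≤ M₂ * θ := by
          have := hM₂ θ hθ
          rw [abs_div, abs_of_pos hθpos, div_le_iff₀ hθpos] at this
          linarith
        calc |θ * (a θ * b (-θ) - b θ * a (-θ))|
            = θ * |a θ * b (-θ) - b θ * a (-θ)| := by
              rw [abs_mul, abs_of_pos hθpos]
          _ ≤ θ * (M₂ * θ) := mul_le_mul_of_nonneg_left h1 (le_of_lt hθpos)
          _ = M₂ * θ ^ 2 := by ring
      have hden : m ^ 3 * θ ^ 2 ≤ b θ * b (-θ) * (ε + b (-θ) * θ ^ 2) := by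
        have h1 : m ≤ b θ := hmle θ hθmem
        have h2 : m ≤ b (-θ) := hmle (-θ) hθnegmem
        have h3 : m * θ ^ 2 ≤ ε + b (-θ) * θ ^ 2 := by nlinarith
        calc m ^ 3 * θ ^ 2 = m * m * (m * θ ^ 2) := by ring
          _ ≤ b θ * b (-θ) * (ε + b (-θ) * θ ^ 2) :=
              mul_le_mul (mul_le_mul h1 h2 (le_of_lt hmpos) (le_of_lt hp)) h3
                (le_of_lt (mul_pos hmpos hθ2)) (le_of_lt (mul_pos hp hq))
      calc |θ * (a θ * b (-θ) - b θ * a (-θ))| /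
            (b θ * b (-θ) * (ε + b (-θ) * θ ^ 2))
          ≤ (M₂ * θ ^ 2) / (m ^ 3 * θ ^ 2) :=
            div_le_div₀ (mul_nonneg hM₂nn (by positivity)) hnum
              (mul_pos (pow_pos hmpos 3) (pow_pos hθpos 2)) hden
        _ = M₂ / m ^ 3 := by
            rw [mul_div_mul_right _ _ (pow_ne_zero 2 hθne)]
    rw [hC]
    exact le_trans (abs_add_le _ _) (add_le_add hbd1 hbd2)
  -- continuity of F ε on Ioc 0 π
  have hFcont : ∀ ε : ℝ, 0 ≤ ε → ContinuousOn (F ε) (Set.Ioc 0 Real.pi) := by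
    intro ε hε
    have hsub' : Set.Ioc (0:ℝ) Real.pi ⊆ Set.Icc (-Real.pi) Real.pi :=
      fun x hx => (hmem x hx).1
    have hmaps' : Set.MapsTo (fun x : ℝ => -x) (Set.Ioc (0:ℝ) Real.pi)
        (Set.Icc (-Real.pi) Real.pi) := fun x hx => (hmem x hx).2
    have hacon : ContinuousOn a (Set.Ioc (0:ℝ) Real.pi) := ha.mono hsub'
    have hbcon : ContinuousOn b (Set.Ioc (0:ℝ) Real.pi) := hb.mono hsub'
    have haneg : ContinuousOn (fun θ : ℝ => a (-θ)) (Set.Ioc (0:ℝ) Real.pi) :=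
      ha.comp continuous_neg.continuousOn hmaps'
    have hbneg : ContinuousOn (fun θ : ℝ => b (-θ)) (Set.Ioc (0:ℝ) Real.pi) :=
      hb.comp continuous_neg.continuousOn hmaps'
    have hbne : ∀ x ∈ Set.Ioc (0:ℝ) Real.pi, b x ≠ 0 :=
      fun x hx => ne_of_gt (hbpos x (hmem x hx).1)
    have hbnegne : ∀ x ∈ Set.Ioc (0:ℝ) Real.pi, b (-x) ≠ 0 :=
      fun x hx => ne_of_gt (hbpos (-x) (hmem x hx).2)
    have hD₁ne : ∀ x ∈ Set.Ioc (0:ℝ) Real.pi, ε + b x * x ^ 2 ≠ 0 := by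
      intro x hx
      have h1 := mul_pos (hbpos x (hmem x hx).1) (pow_pos hx.1 2)
      exact ne_of_gt (by linarith)
    have hD₂ne : ∀ x ∈ Set.Ioc (0:ℝ) Real.pi, ε + b (-x) * x ^ 2 ≠ 0 := by
      intro x hx
      have h1 := mul_pos (hbpos (-x) (hmem x hx).2) (pow_pos hx.1 2)
      exact ne_of_gt (by linarith)
    apply continuousOn_id.mul
    apply ContinuousOn.sub
    · exact ((hacon.div hbcon hbne).mul (continuousOn_const.div
        (continuousOn_const.add (hbcon.mul (continuousOn_pow 2))) hD₁ne))
    · exact ((haneg.div hbneg hbnegne).mul (continuousOn_const.div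
        (continuousOn_const.add (hbneg.mul (continuousOn_pow 2))) hD₂ne))
  have hIoc : Set.uIoc (0:ℝ) Real.pi = Set.Ioc 0 Real.pi := Set.uIoc_of_le (le_of_lt hπ)
  -- the main dominated convergence step
  have hmain : Filter.Tendsto (fun ε => ∫ θ in (0:ℝ)..Real.pi, F ε θ)
      (nhdsWithin 0 (Set.Ioi 0)) (nhds (∫ θ in (0:ℝ)..Real.pi, F 0 θ)) := by
    apply intervalIntegral.tendsto_integral_filter_of_dominated_convergence
      (bound := fun _ => C)
    · filter_upwards [self_mem_nhdsWithin] with ε (hε : ε ∈ Set.Ioi (0:ℝ))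
      rw [hIoc]
      exact (hFcont ε (le_of_lt hε)).aestronglyMeasurable measurableSet_Ioc
    · filter_upwards [self_mem_nhdsWithin] with ε (hε : ε ∈ Set.Ioi (0:ℝ))
      filter_upwards with θ hθ
      rw [hIoc] at hθ
      simpa using key ε (le_of_lt hε) θ hθ
    · exact intervalIntegrable_const
    · filter_upwards with θ hθ
      rw [hIoc] at hθ
      have hθpos : 0 < θ := hθ.1
      have hp : 0 < b θ := hbpos θ (hmem θ hθ).1
      have hq : 0 < b (-θ) := hbpos (-θ) (hmem θ hθ).2
      have hc : ContinuousAt (fun ε => F ε θ) 0 := by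
        apply ContinuousAt.mul continuousAt_const
        apply ContinuousAt.sub
        · apply ContinuousAt.mul continuousAt_const
          apply ContinuousAt.div continuousAt_const
          · exact (continuousAt_id.add continuousAt_const)
          · simp only [id_eq, zero_add]
            exact ne_of_gt (mul_pos hp (pow_pos hθpos 2))
        · apply ContinuousAt.mul continuousAt_const
          apply ContinuousAt.div continuousAt_const
          · exact (continuousAt_id.add continuousAt_const)
          · simp only [id_eq, zero_add]
            exact ne_of_gt (mul_pos hq (pow_pos hθpos 2))
      exact hc.continuousWithinAt.tendsto
  -- conclude
  constructor
  · have hcongr : ∀ᶠ ε in nhdsWithin (0:ℝ) (Set.Ioi 0),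
        (fun ε => ∫ θ in (0:ℝ)..Real.pi, F ε θ) ε = J ε := by
      filter_upwards [self_mem_nhdsWithin] with ε (hε : ε ∈ Set.Ioi (0:ℝ))
      exact (hJ ε (le_of_lt hε)).symm
    have h0 : (∫ θ in (0:ℝ)..Real.pi, F 0 θ) = J 0 := (hJ 0 le_rfl).symm
    rw [← h0]
    exact hmain.congr' hcongr
  · rw [hJ 0 le_rfl]
    apply intervalIntegral.integral_congr
    intro θ hθ
    rw [Set.uIcc_of_le (le_of_lt hπ)] at hθ
    rcases eq_or_lt_of_le hθ.1 with h0 | h0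
    · subst h0
      simp
    · have hθmem := (hmem θ ⟨h0, hθ.2⟩).1
      have hθnegmem := (hmem θ ⟨h0, hθ.2⟩).2
      have hp : 0 < b θ := hbpos θ hθmem
      have hq : 0 < b (-θ) := hbpos (-θ) hθnegmem
      have hθne : θ ≠ 0 := ne_of_gt h0
      field_simp
      ring
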